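/- Let σ be a morphism on a finite alphabet A prolongable on a, with infinite fixed point u = σ^ω(a) and all letters of A occurring in u, and suppose the spectral radius θ of the incidence matrix M_σ satisfies θ > 1. Then lim inf_{N→∞} |σ(u₁u₂⋯u_N)|/N > 1, where u₁⋯u_N denotes the prefix of u of length N. -/

import Mathlib

/-- `w` is a prefix of the infinite word `a`. -/
def IsPrefOf {A : Type*} (w : List A) (a : ℕ → A) : Prop :=
  ∀ i : Fin w.length, w.get i = a i

/-- Fractional power `V^α`: `V^⌊α⌋` followed by the prefix of `V`
of length `⌈{α}·|V|⌉`. -/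
noncomputable def fracPow {A : Type*} (V : List A) (α : ℝ) : List A :=
  (List.replicate ⌊α⌋₊ V).flatten ++ V.take ⌈Int.fract α * V.length⌉₊

/-- The set of admissible exponents in the definition of the Diophantine exponent. -/
def dioSet {A : Type*} (a : ℕ → A) : Set ℝ :=
  {ρ | ∀ N : ℕ, ∃ (U V : List A) (α : ℝ), V ≠ [] ∧ 1 ≤ α ∧
    IsPrefOf (U ++ fracPow V α) a ∧ N ≤ (U ++ fracPow V α).length ∧
    ρ ≤ ((U ++ fracPow V α).length : ℝ) / ((U.length : ℝ) + (V.length : ℝ))}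

/-- Diophantine exponent of an infinite word. -/
noncomputable def dio {A : Type*} (a : ℕ → A) : EReal :=
  sSup ((fun ρ : ℝ => (ρ : EReal)) '' dioSet a)

/-- Action of a morphism (given by its values on letters) on a finite word. -/
def mapW {A : Type*} (σ : A → List A) (w : List A) : List A := w.flatMap σ

/-- `n`-th iterate of a morphism applied to a word. -/
def iterW {A : Type*} (σ : A → List A) (n : ℕ) (w : List A) : List A :=
  (mapW σ)^[n] w

/-- `σ` is prolongable on the letter `a`. -/
def Prolongable {A : Type*} (σ : A → List A) (a : A) : Prop :=
  (∃ W : List A, W ≠ [] ∧ σ a = a :: W) ∧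
  Filter.Tendsto (fun n => (iterW σ n [a]).length) Filter.atTop Filter.atTop

/-- The letter `b` has maximal growth for `σ`. -/
def MaxGrowth {A : Type*} (σ : A → List A) (b : A) : Prop :=
  ∃ C : ℝ, ∀ c : A, ∀ n : ℕ, 1 ≤ n →
    ((iterW σ n [c]).length : ℝ) < C * ((iterW σ n [b]).length : ℝ)

/-- Incidence matrix of a morphism, viewed over `ℂ`. -/
noncomputable def incMat {A : Type*} [Fintype A] [DecidableEq A]
    (σ : A → List A) : Matrix A A ℂ :=
  fun i j => ((σ j).count i : ℂ)

/-- Spectral radius of the incidence matrix of a morphism. -/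
noncomputable def specRad {A : Type*} [Fintype A] [DecidableEq A]
    (σ : A → List A) : ℝ :=
  sSup ((fun μ : ℂ => ‖μ‖) '' spectrum ℂ (incMat σ))


namespace Stmt13
open Filter List

attribute [local instance 0] Classical.propDecidable

variable {A : Type*}

theorem mapW_append (σ : A → List A) (v w : List A) :
    mapW σ (v ++ w) = mapW σ v ++ mapW σ w := List.flatMap_append

theorem mapW_cons (σ : A → List A) (x : A) (w : List A) :
    mapW σ (x :: w) = σ x ++ mapW σ w := List.flatMap_cons ..

theorem mapW_singleton (σ : A → List A) (x : A) : mapW σ [x] = σ x := by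
  simp [mapW]

theorem iterW_zero (σ : A → List A) (w : List A) : iterW σ 0 w = w := rfl

theorem iterW_succ (σ : A → List A) (n : ℕ) (w : List A) :
    iterW σ (n+1) w = iterW σ n (mapW σ w) := Function.iterate_succ_apply ..

theorem iterW_succ' (σ : A → List A) (n : ℕ) (w : List A) :
    iterW σ (n+1) w = mapW σ (iterW σ n w) := Function.iterate_succ_apply' ..

theorem iterW_add (σ : A → List A) (m n : ℕ) (w : List A) :
    iterW σ (m + n) w = iterW σ m (iterW σ n w) := Function.iterate_add_apply ..

theorem iterW_append (σ : A → List A) (n : ℕ) (v w : List A) :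
    iterW σ n (v ++ w) = iterW σ n v ++ iterW σ n w := by
  induction n generalizing v w with
  | zero => rfl
  | succ n ih =>
    rw [iterW_succ, iterW_succ, iterW_succ, mapW_append, ih]

theorem iterW_nil (σ : A → List A) (n : ℕ) : iterW σ n [] = [] := by
  induction n with
  | zero => rfl
  | succ n ih => rw [iterW_succ']; rw [ih]; rfl

theorem iterW_cons (σ : A → List A) (n : ℕ) (x : A) (w : List A) :
    iterW σ n (x :: w) = iterW σ n [x] ++ iterW σ n w := by
  have : x :: w = [x] ++ w := rfl
  rw [this, iterW_append]

/-- growth function of a letter -/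
def grw (σ : A → List A) (c : A) (n : ℕ) : ℕ := (iterW σ n [c]).length

theorem grw_zero (σ : A → List A) (c : A) : grw σ c 0 = 1 := rfl

theorem countP_iterW_sum (σ : A → List A) (p : A → Bool) (n : ℕ) (w : List A) :
    (iterW σ n w).countP p = (w.map fun c => (iterW σ n [c]).countP p).sum := by
  induction w with
  | nil => rw [iterW_nil]; rfl
  | cons x t ih =>
    rw [iterW_cons, List.countP_append, List.map_cons, List.sum_cons, ih]

theorem length_iterW_sum (σ : A → List A) (n : ℕ) (w : List A) :
    (iterW σ n w).length = (w.map fun c => grw σ c n).sum := by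
  induction w with
  | nil => rw [iterW_nil]; rfl
  | cons x t ih =>
    rw [iterW_cons, List.length_append, List.map_cons, List.sum_cons, ih]; rfl

theorem grw_succ_sum (σ : A → List A) (c : A) (n : ℕ) :
    grw σ c (n+1) = ((σ c).map fun x => grw σ x n).sum := by
  rw [grw, iterW_succ, mapW_singleton, length_iterW_sum]

theorem grw_le_of_mem (σ : A → List A) {x c : A} (hx : x ∈ σ c) (n : ℕ) :
    grw σ x n ≤ grw σ c (n+1) := by
  obtain ⟨s, t, hst⟩ := List.append_of_mem hx
  have h : grw σ c (n+1) = (iterW σ n s).length + ((iterW σ n [x]).length + (iterW σ n t).length) := by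
    rw [grw, iterW_succ, mapW_singleton, hst, iterW_append, iterW_cons]
    simp [List.length_append]
  rw [grw, h]; omega

section Helpers
variable {F G : A → ℕ}

theorem nat_listsum_le {l : List A} {K : ℕ} (h : ∀ y ∈ l, F y ≤ K + G y) :
    (l.map F).sum ≤ l.length * K + (l.map G).sum := by
  induction l with
  | nil => simp
  | cons x t ih =>
    simp only [List.map_cons, List.sum_cons, List.length_cons]
    have h1 := h x List.mem_cons_self
    have h2 := ih fun y hy => h y (List.mem_cons_of_mem x hy)
    have : (t.length + 1) * K = t.length * K + K := by ring
    omega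

theorem listsum_swap (l : List A) (n : ℕ) (H : ℕ → A → ℕ) :
    (l.map fun y => ∑ j ∈ Finset.range n, H j y).sum
      = ∑ j ∈ Finset.range n, (l.map fun y => H j y).sum := by
  induction l with
  | nil => simp
  | cons x t ih =>
    simp only [List.map_cons, List.sum_cons, ih]
    rw [← Finset.sum_add_distrib]

theorem listsum_mul_left (l : List A) (K : ℕ) (e : A → ℕ) :
    (l.map fun y => K * e y).sum = K * (l.map e).sum := by
  induction l with
  | nil => simp
  | cons x t ih =>
    simp only [List.map_cons, List.sum_cons, ih, Nat.mul_add]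

theorem real_listsum_le {l : List A} {B CA : ℝ}
    (h : ∀ y ∈ l, (F y : ℝ) ≤ B + CA * G y) (hB : 0 ≤ B) :
    ((l.map F).sum : ℝ) ≤ l.length * B + CA * ((l.map G).sum : ℕ) := by
  induction l with
  | nil => simp
  | cons x t ih =>
    have h1 := h x List.mem_cons_self
    have h2 := ih fun y hy => h y (List.mem_cons_of_mem x hy)
    simp only [List.map_cons, List.sum_cons, List.length_cons]
    push_cast
    push_cast at h2
    nlinarith

theorem real_listsum_le' {l : List A} {B : ℝ}
    (h : ∀ y ∈ l, (F y : ℝ) ≤ B) (hB : 0 ≤ B) :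
    ((l.map F).sum : ℝ) ≤ l.length * B := by
  have := real_listsum_le (G := fun _ => 0) (CA := 0)
    (fun y hy => by simpa using h y hy) hB
  simpa using this

end Helpers

section Fin
variable [Fintype A] [DecidableEq A] (σ : A → List A)

/-- max image length, at least 1 -/
noncomputable def Smax : ℕ := max 1 (Finset.univ.sup fun c : A => (σ c).length)

theorem one_le_Smax : 1 ≤ Smax σ := le_max_left _ _

theorem length_le_Smax (c : A) : (σ c).length ≤ Smax σ := by
  have h := Finset.le_sup (f := fun c : A => (σ c).length) (Finset.mem_univ c)
  exact le_trans h (le_max_right 1 _)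

theorem length_mapW_le (w : List A) : (mapW σ w).length ≤ Smax σ * w.length := by
  induction w with
  | nil => simp [mapW]
  | cons x t ih =>
    rw [mapW_cons, List.length_append, List.length_cons, Nat.mul_succ]
    have := length_le_Smax σ x
    omega

theorem length_iterW_le (n : ℕ) (w : List A) :
    (iterW σ n w).length ≤ Smax σ ^ n * w.length := by
  induction n generalizing w with
  | zero => simp [iterW_zero]
  | succ n ih =>
    rw [iterW_succ']
    calc (mapW σ (iterW σ n w)).length ≤ Smax σ * (iterW σ n w).length :=
          length_mapW_le σ _
      _ ≤ Smax σ * (Smax σ ^ n * w.length) := Nat.mul_le_mul_left _ (ih w)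
      _ = Smax σ ^ (n+1) * w.length := by ring

/-- the set of subexponential letters -/
def Pset : Set A := {c | ∀ r : ℝ, 1 < r → ∃ C : ℝ, ∀ n : ℕ, (grw σ c n : ℝ) ≤ C * r ^ n}

theorem Puniform {r : ℝ} (hr : 1 < r) :
    ∃ C : ℝ, 1 ≤ C ∧ ∀ c ∈ Pset σ, ∀ n : ℕ, (grw σ c n : ℝ) ≤ C * r ^ n := by
  set Cf : A → ℝ := fun c => if h : c ∈ Pset σ then Classical.choose (h r hr) else 1 with hCf
  have hnn : (0:ℝ) ≤ ∑ c : A, max (Cf c) 0 := Finset.sum_nonneg fun i _ => le_max_right _ _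
  refine ⟨1 + ∑ c : A, max (Cf c) 0, by linarith, fun c hc n => ?_⟩
  have h1 : (grw σ c n : ℝ) ≤ Cf c * r ^ n := by
    rw [hCf]; simp only [dif_pos hc]
    exact Classical.choose_spec (hc r hr) n
  have h2 : Cf c ≤ 1 + ∑ c : A, max (Cf c) 0 := by
    have h3 : max (Cf c) 0 ≤ ∑ c : A, max (Cf c) 0 :=
      Finset.single_le_sum (f := fun c => max (Cf c) 0) (fun i _ => le_max_right _ _)
        (Finset.mem_univ c)
    have h4 := le_max_left (Cf c) 0
    linarith
  calc (grw σ c n : ℝ) ≤ Cf c * r ^ n := h1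
    _ ≤ (1 + ∑ c : A, max (Cf c) 0) * r ^ n :=
        mul_le_mul_of_nonneg_right h2 (by positivity)

theorem Pset_closed {c x : A} (hc : c ∈ Pset σ) (hx : x ∈ σ c) : x ∈ Pset σ := by
  intro r hr
  obtain ⟨C, hC⟩ := hc r hr
  refine ⟨C * r, fun n => ?_⟩
  calc (grw σ x n : ℝ) ≤ (grw σ c (n+1) : ℝ) := by
        exact_mod_cast grw_le_of_mem σ hx n
    _ ≤ C * r ^ (n+1) := hC (n+1)
    _ = C * r * r ^ n := by ring

theorem mem_Pset_of_forall {c : A} (h : ∀ x ∈ σ c, x ∈ Pset σ) : c ∈ Pset σ := by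
  intro r hr
  obtain ⟨C, hC1, hC⟩ := Puniform σ hr
  have hr0 : (0:ℝ) < r := lt_trans one_pos hr
  refine ⟨Smax σ * C, fun n => ?_⟩
  have hS1 : (1:ℝ) ≤ Smax σ := by exact_mod_cast one_le_Smax σ
  match n with
  | 0 =>
    rw [grw_zero]
    have : (1:ℝ) ≤ Smax σ * C := by nlinarith
    simpa using this
  | (n+1) =>
    have h1 : (grw σ c (n+1) : ℝ) = (((σ c).map fun x => grw σ x n).sum : ℕ) := by
      rw [grw_succ_sum σ c n]
    have h2 : (((σ c).map fun x => grw σ x n).sum : ℝ) ≤ (σ c).length * (C * r ^ n) :=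
      real_listsum_le' (fun y hy => hC y (h y hy) n) (by positivity)
    have h3 : ((σ c).length : ℝ) ≤ Smax σ := by exact_mod_cast length_le_Smax σ c
    have h4 : (0:ℝ) ≤ C * r ^ n := by positivity
    calc (grw σ c (n+1) : ℝ) ≤ (σ c).length * (C * r ^ n) := by rw [h1]; exact h2
      _ ≤ Smax σ * (C * r ^ n) := mul_le_mul_of_nonneg_right h3 h4
      _ = Smax σ * C * r ^ n * 1 := by ring
      _ ≤ Smax σ * C * r ^ n * r := by
          have hC0 : (0:ℝ) ≤ C := by linarith
          exact mul_le_mul_of_nonneg_left hr.le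
            (mul_nonneg (mul_nonneg (by positivity) hC0) (by positivity))
      _ = Smax σ * C * r ^ (n+1) := by ring

theorem Eset_closed {c : A} (hc : c ∉ Pset σ) : ∃ x ∈ σ c, x ∉ Pset σ := by
  by_contra h
  push_neg at h
  exact hc (mem_Pset_of_forall σ h)
end Fin

section Counts
variable [Fintype A] [DecidableEq A] (σ : A → List A)

/-- number of non-subexponential ("exponential") letters -/
noncomputable def ecnt (w : List A) : ℕ := w.countP fun c => decide (c ∉ Pset σ)

/-- number of subexponential letters -/
noncomputable def pcnt (w : List A) : ℕ := w.countP fun c => decide (c ∈ Pset σ)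

theorem ecnt_append (v w : List A) : ecnt σ (v ++ w) = ecnt σ v + ecnt σ w :=
  List.countP_append ..

theorem pcnt_append (v w : List A) : pcnt σ (v ++ w) = pcnt σ v + pcnt σ w :=
  List.countP_append ..

theorem ecnt_cons (x : A) (w : List A) :
    ecnt σ (x :: w) = ecnt σ w + if x ∈ Pset σ then 0 else 1 := by
  rw [ecnt, List.countP_cons]
  by_cases h : x ∈ Pset σ <;> simp [ecnt, h]

theorem pcnt_cons (x : A) (w : List A) :
    pcnt σ (x :: w) = pcnt σ w + if x ∈ Pset σ then 1 else 0 := by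
  rw [pcnt, List.countP_cons]
  by_cases h : x ∈ Pset σ <;> simp [pcnt, h]

theorem ecnt_singleton_of_not_mem {x : A} (hx : x ∉ Pset σ) : ecnt σ [x] = 1 := by
  rw [show [x] = x :: ([]:List A) from rfl, ecnt_cons, if_neg hx]; rfl

theorem length_eq_ecnt_add_pcnt (w : List A) : w.length = ecnt σ w + pcnt σ w := by
  induction w with
  | nil => rfl
  | cons x t ih =>
    rw [List.length_cons, ecnt_cons, pcnt_cons, ih]
    by_cases h : x ∈ Pset σ <;> simp [h] <;> omega

theorem ecnt_le_length (w : List A) : ecnt σ w ≤ w.length := List.countP_le_length ..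
theorem pcnt_le_length (w : List A) : pcnt σ w ≤ w.length := List.countP_le_length ..

theorem ecnt_iterW_sum (n : ℕ) (w : List A) :
    ecnt σ (iterW σ n w) = (w.map fun c => ecnt σ (iterW σ n [c])).sum :=
  countP_iterW_sum ..

theorem pcnt_iterW_sum (n : ℕ) (w : List A) :
    pcnt σ (iterW σ n w) = (w.map fun c => pcnt σ (iterW σ n [c])).sum :=
  countP_iterW_sum ..

theorem mem_iterW_Pset {c x : A} (hc : c ∈ Pset σ) {n : ℕ} (hx : x ∈ iterW σ n [c]) :
    x ∈ Pset σ := by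
  induction n generalizing x with
  | zero => rw [iterW_zero] at hx; rw [List.mem_singleton] at hx; rwa [hx]
  | succ n ih =>
    rw [iterW_succ'] at hx
    obtain ⟨z, hz, hxz⟩ := List.mem_flatMap.mp hx
    exact Pset_closed σ (ih hz) hxz

theorem ecnt_iterW_eq_zero {c : A} (hc : c ∈ Pset σ) (n : ℕ) :
    ecnt σ (iterW σ n [c]) = 0 := by
  rw [ecnt, List.countP_eq_zero]
  intro x hx
  simp only [decide_eq_true_eq, not_not]
  exact mem_iterW_Pset σ hc hx

theorem pcnt_le_grw (c : A) (n : ℕ) : pcnt σ (iterW σ n [c]) ≤ grw σ c n :=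
  pcnt_le_length σ _

theorem one_le_ecnt_image {c : A} (hc : c ∉ Pset σ) : 1 ≤ ecnt σ (σ c) := by
  obtain ⟨x, hx, hxP⟩ := Eset_closed σ hc
  exact List.countP_pos_iff.mpr ⟨x, hx, by simpa using hxP⟩

theorem ecnt_le_ecnt_mapW (w : List A) : ecnt σ w ≤ ecnt σ (mapW σ w) := by
  induction w with
  | nil => simp [mapW]
  | cons x t ih =>
    rw [mapW_cons, ecnt_append, ecnt_cons]
    by_cases h : x ∈ Pset σ
    · simp only [if_pos h]; omega
    · simp only [if_neg h]
      have := one_le_ecnt_image σ h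
      omega

theorem ecnt_iterW_mono {m n : ℕ} (h : m ≤ n) (w : List A) :
    ecnt σ (iterW σ m w) ≤ ecnt σ (iterW σ n w) := by
  induction n, h using Nat.le_induction with
  | base => exact le_rfl
  | succ n hmn ih =>
    rw [iterW_succ']
    exact le_trans ih (ecnt_le_ecnt_mapW σ _)

/-- max growth among subexponential letters -/
noncomputable def Gf (m : ℕ) : ℕ :=
  (Finset.univ.filter fun c : A => c ∈ Pset σ).sup fun d => grw σ d m

theorem grw_le_Gf {c : A} (hc : c ∈ Pset σ) (m : ℕ) : grw σ c m ≤ Gf σ m := by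
  unfold Gf
  exact Finset.le_sup (f := fun d => grw σ d m) (Finset.mem_filter.mpr ⟨Finset.mem_univ c, hc⟩)

theorem Gf_le {r : ℝ} (hr : 1 < r) :
    ∃ C : ℝ, 1 ≤ C ∧ ∀ m : ℕ, (Gf σ m : ℝ) ≤ C * r ^ m := by
  obtain ⟨C, hC1, hC⟩ := Puniform σ hr
  refine ⟨C, hC1, fun m => ?_⟩
  rcases Finset.eq_empty_or_nonempty (Finset.univ.filter fun c : A => c ∈ Pset σ) with he | hne
  · rw [Gf, he, Finset.sup_empty]
    have h0 : (0:ℝ) < r ^ m := pow_pos (lt_trans one_pos hr) m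
    have : ((⊥:ℕ):ℝ) = 0 := by norm_num
    rw [this]
    nlinarith
  · obtain ⟨d, hd, hsup⟩ := Finset.exists_mem_eq_sup _ hne fun d => grw σ d m
    rw [Gf, hsup]
    exact hC d (Finset.mem_filter.mp hd).2 m

/-- key structural bound: subexponential letters in `σⁿ(x)` are born
from exponential letters along the way. -/
theorem Bpp (n : ℕ) : ∀ x : A,
    pcnt σ (iterW σ n [x]) ≤
      Gf σ n + ∑ j ∈ Finset.range n, Gf σ (n-1-j) * Smax σ * ecnt σ (iterW σ j [x]) := by
  induction n with
  | zero =>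
    intro x
    by_cases hx : x ∈ Pset σ
    · have h1 : pcnt σ (iterW σ 0 [x]) ≤ grw σ x 0 := pcnt_le_grw σ x 0
      have h2 := grw_le_Gf σ hx 0
      simp only [Finset.range_zero, Finset.sum_empty]
      omega
    · have : pcnt σ (iterW σ 0 [x]) = 0 := by
        rw [iterW_zero, pcnt, List.countP_eq_zero]
        intro z hz
        rw [List.mem_singleton] at hz
        subst hz
        simpa using hx
      omega
  | succ n ih =>
    intro x
    by_cases hx : x ∈ Pset σ
    · have h1 : pcnt σ (iterW σ (n+1) [x]) ≤ grw σ x (n+1) := pcnt_le_grw σ x (n+1)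
      have h2 := grw_le_Gf σ hx (n+1)
      exact le_trans (le_trans h1 h2) (Nat.le_add_right _ _)
    · have h1 : iterW σ (n+1) [x] = iterW σ n (σ x) := by
        rw [iterW_succ, mapW_singleton]
      have h2 : pcnt σ (iterW σ n (σ x))
          = ((σ x).map fun y => pcnt σ (iterW σ n [y])).sum := pcnt_iterW_sum ..
      have h3 : ((σ x).map fun y => pcnt σ (iterW σ n [y])).sum
          ≤ (σ x).length * Gf σ n
            + ((σ x).map fun y =>
                ∑ j ∈ Finset.range n, Gf σ (n-1-j) * Smax σ * ecnt σ (iterW σ j [y])).sum :=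
        nat_listsum_le fun y _ => ih y
    -- swap the sums and recombine
      have h4 : ((σ x).map fun y =>
            ∑ j ∈ Finset.range n, Gf σ (n-1-j) * Smax σ * ecnt σ (iterW σ j [y])).sum
          = ∑ j ∈ Finset.range n, Gf σ (n-1-j) * Smax σ * ecnt σ (iterW σ (j+1) [x]) := by
        rw [listsum_swap]
        apply Finset.sum_congr rfl
        intro j hj
        rw [listsum_mul_left (σ x) (Gf σ (n-1-j) * Smax σ) fun y => ecnt σ (iterW σ j [y])]
        congr 1
        rw [← ecnt_iterW_sum, iterW_succ, mapW_singleton]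
      calc pcnt σ (iterW σ (n+1) [x])
          = pcnt σ (iterW σ n (σ x)) := by rw [h1]
        _ ≤ (σ x).length * Gf σ n
            + ∑ j ∈ Finset.range n, Gf σ (n-1-j) * Smax σ * ecnt σ (iterW σ (j+1) [x]) := by
            rw [h2, ← h4]; exact h3
        _ ≤ Smax σ * Gf σ n
            + ∑ j ∈ Finset.range n, Gf σ (n-1-j) * Smax σ * ecnt σ (iterW σ (j+1) [x]) := by
            exact Nat.add_le_add_right (Nat.mul_le_mul_right (Gf σ n) (length_le_Smax σ x)) _
        _ = ∑ j ∈ Finset.range (n+1), Gf σ (n+1-1-j) * Smax σ * ecnt σ (iterW σ j [x]) := by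
            rw [Finset.sum_range_succ']
            have hz : Gf σ (n+1-1-0) * Smax σ * ecnt σ (iterW σ 0 [x]) = Smax σ * Gf σ n := by
              rw [iterW_zero, ecnt_singleton_of_not_mem σ hx]
              simp [Nat.mul_comm]
            rw [hz, Nat.add_comm]
            congr 1
            apply Finset.sum_congr rfl
            intro j hj
            have he : n+1-1-(j+1) = n-1-j := by omega
            rw [he]
        _ ≤ Gf σ (n+1) + ∑ j ∈ Finset.range (n+1), Gf σ (n+1-1-j) * Smax σ * ecnt σ (iterW σ j [x]) :=
            Nat.le_add_left _ _

end Counts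

theorem geom_tail_le {x : ℝ} (h0 : 0 ≤ x) (h1 : x < 1) (n : ℕ) :
    ∑ i ∈ Finset.range n, x ^ i ≤ (1 - x)⁻¹ := by
  have hpos : (0:ℝ) < 1 - x := by linarith
  rw [← one_div, le_div_iff₀ hpos]
  have := geom_sum_mul x n
  have hxn : (0:ℝ) ≤ x ^ n := pow_nonneg h0 n
  nlinarith

section Doubling
variable [Fintype A] [DecidableEq A] (σ : A → List A)

theorem exists_two_le_ecnt {c : A} (hc : c ∉ Pset σ) :
    ∃ q : ℕ, 2 ≤ ecnt σ (iterW σ q [c]) := by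
  by_contra hcon
  push_neg at hcon
  apply hc
  intro r hr
  have hr0 : (0:ℝ) < r := lt_trans one_pos hr
  have hr1 : (0:ℝ) < r - 1 := by linarith
  obtain ⟨C, hC1, hG⟩ := Gf_le σ hr
  have hC0 : (0:ℝ) ≤ C := by linarith
  have hS0 : (0:ℝ) ≤ (Smax σ : ℝ) := Nat.cast_nonneg _
  refine ⟨1 + C + C * Smax σ * (r-1)⁻¹, fun n => ?_⟩
  have hB := Bpp σ n c
  have hlen : grw σ c n = ecnt σ (iterW σ n [c]) + pcnt σ (iterW σ n [c]) :=
    length_eq_ecnt_add_pcnt σ _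
  have hgr : grw σ c n ≤ 1 + (Gf σ n
      + ∑ j ∈ Finset.range n, Gf σ (n-1-j) * Smax σ * ecnt σ (iterW σ j [c])) := by
    have := hcon n; omega
  have hcast : (grw σ c n : ℝ) ≤ 1 + ((Gf σ n : ℝ)
      + ∑ j ∈ Finset.range n, (Gf σ (n-1-j) : ℝ) * Smax σ * ecnt σ (iterW σ j [c])) := by
    exact_mod_cast hgr
  have hsum : ∑ j ∈ Finset.range n, (Gf σ (n-1-j) : ℝ) * Smax σ * ecnt σ (iterW σ j [c])
      ≤ ∑ j ∈ Finset.range n, C * Smax σ * r ^ (n-1-j) := by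
    apply Finset.sum_le_sum
    intro j hj
    have h1 : (Gf σ (n-1-j) : ℝ) ≤ C * r ^ (n-1-j) := hG _
    have h2 : (ecnt σ (iterW σ j [c]) : ℝ) ≤ 1 := by
      have := hcon j
      exact_mod_cast Nat.lt_succ_iff.mp this
    have h3 : (0:ℝ) ≤ (ecnt σ (iterW σ j [c]) : ℝ) := Nat.cast_nonneg _
    have h4 : (0:ℝ) ≤ r ^ (n-1-j) := le_of_lt (pow_pos hr0 _)
    calc (Gf σ (n-1-j) : ℝ) * Smax σ * ecnt σ (iterW σ j [c])
        ≤ (Gf σ (n-1-j) : ℝ) * Smax σ * 1 := by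
          apply mul_le_mul_of_nonneg_left h2 (by positivity)
      _ = (Gf σ (n-1-j) : ℝ) * Smax σ := by ring
      _ ≤ (C * r ^ (n-1-j)) * Smax σ := mul_le_mul_of_nonneg_right h1 hS0
      _ = C * Smax σ * r ^ (n-1-j) := by ring
  have hgeo : ∑ j ∈ Finset.range n, C * Smax σ * r ^ (n-1-j)
      ≤ C * Smax σ * (r ^ n * (r-1)⁻¹) := by
    rw [← Finset.mul_sum]
    apply mul_le_mul_of_nonneg_left _ (mul_nonneg hC0 hS0)
    have hrefl : ∑ j ∈ Finset.range n, r ^ (n-1-j) = ∑ j ∈ Finset.range n, r ^ j :=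
      Finset.sum_range_reflect (fun j => r ^ j) n
    rw [hrefl, geom_sum_eq (ne_of_gt hr) n]
    rw [div_le_iff₀ hr1]
    have h5 : (0:ℝ) < r ^ n := pow_pos hr0 n
    have h6 : r ^ n * (r - 1)⁻¹ * (r - 1) = r ^ n := by
      field_simp
    rw [h6]
    linarith
  have hGn : (Gf σ n : ℝ) ≤ C * r ^ n := hG n
  have h1rn : (1:ℝ) ≤ r ^ n := one_le_pow₀ hr.le
  have hinv : (0:ℝ) ≤ (r-1)⁻¹ := le_of_lt (inv_pos.mpr hr1)
  calc (grw σ c n : ℝ) ≤ 1 + ((Gf σ n : ℝ)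
        + ∑ j ∈ Finset.range n, (Gf σ (n-1-j) : ℝ) * Smax σ * ecnt σ (iterW σ j [c])) := hcast
    _ ≤ 1 + (C * r ^ n + C * Smax σ * (r ^ n * (r-1)⁻¹)) := by linarith
    _ ≤ (1 + C + C * Smax σ * (r-1)⁻¹) * r ^ n := by nlinarith [mul_nonneg (mul_nonneg hC0 hS0) hinv]

/-- uniform doubling time for exponential letters -/
noncomputable def Qv : ℕ :=
  1 + Finset.univ.sup fun c : A =>
    if h : c ∉ Pset σ then Classical.choose (exists_two_le_ecnt σ h) else 0

theorem one_le_Qv : 1 ≤ Qv σ := Nat.le_add_right 1 _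

theorem two_le_ecnt_Qv {c : A} (hc : c ∉ Pset σ) :
    2 ≤ ecnt σ (iterW σ (Qv σ) [c]) := by
  set q := if h : c ∉ Pset σ then Classical.choose (exists_two_le_ecnt σ h) else 0 with hq
  have hspec : 2 ≤ ecnt σ (iterW σ q [c]) := by
    rw [hq, dif_pos hc]
    exact Classical.choose_spec (exists_two_le_ecnt σ hc)
  have hle : q ≤ Qv σ := by
    have h1 : q ≤ Finset.univ.sup fun c : A =>
        if h : c ∉ Pset σ then Classical.choose (exists_two_le_ecnt σ h) else 0 := by
      rw [hq]
      exact Finset.le_sup (f := fun c : A =>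
        if h : c ∉ Pset σ then Classical.choose (exists_two_le_ecnt σ h) else 0)
        (Finset.mem_univ c)
    unfold Qv
    omega
  exact le_trans hspec (ecnt_iterW_mono σ hle [c])

theorem ecnt_double (w : List A) : 2 * ecnt σ w ≤ ecnt σ (iterW σ (Qv σ) w) := by
  induction w with
  | nil => rw [iterW_nil]; simp [ecnt]
  | cons x t ih =>
    rw [iterW_cons, ecnt_append, ecnt_cons]
    by_cases h : x ∈ Pset σ
    · rw [if_pos h]; omega
    · rw [if_neg h]
      have := two_le_ecnt_Qv σ h
      omega

theorem ecnt_pow_double (k : ℕ) (w : List A) :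
    2 ^ k * ecnt σ w ≤ ecnt σ (iterW σ (k * Qv σ) w) := by
  induction k generalizing w with
  | zero => rw [Nat.zero_mul, iterW_zero]; omega
  | succ k ih =>
    have h1 : (k+1) * Qv σ = Qv σ + k * Qv σ := by ring
    rw [h1, iterW_add]
    calc 2 ^ (k+1) * ecnt σ w = 2 * (2 ^ k * ecnt σ w) := by ring
      _ ≤ 2 * ecnt σ (iterW σ (k * Qv σ) w) := by
          have := ih w; omega
      _ ≤ ecnt σ (iterW σ (Qv σ) (iterW σ (k * Qv σ) w)) := ecnt_double σ _

theorem ecnt_growth {j n : ℕ} (h : j ≤ n) (w : List A) :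
    2 ^ ((n-j) / Qv σ) * ecnt σ (iterW σ j w) ≤ ecnt σ (iterW σ n w) := by
  set q := (n-j) / Qv σ with hqd
  have h1 : q * Qv σ ≤ n - j := by rw [hqd]; exact Nat.div_mul_le_self _ _
  calc 2 ^ q * ecnt σ (iterW σ j w) ≤ ecnt σ (iterW σ (q * Qv σ) (iterW σ j w)) :=
        ecnt_pow_double σ q _
    _ = ecnt σ (iterW σ (q * Qv σ + j) w) := by rw [iterW_add]
    _ ≤ ecnt σ (iterW σ n w) := ecnt_iterW_mono σ (by omega) w

theorem rho_exists : ∃ ρ : ℝ, 1 < ρ ∧ ρ ^ (2 * Qv σ) = 2 := by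
  have hQ : (0:ℝ) < ((2 * Qv σ : ℕ) : ℝ) := by
    have := one_le_Qv σ
    have : 1 ≤ 2 * Qv σ := by omega
    exact_mod_cast Nat.lt_of_lt_of_le Nat.zero_lt_one this
  refine ⟨(2:ℝ) ^ (((2 * Qv σ : ℕ) : ℝ)⁻¹), ?_, ?_⟩
  · rw [Real.one_lt_rpow_iff_of_pos (by norm_num)]
    left
    exact ⟨by norm_num, inv_pos.mpr hQ⟩
  · rw [← Real.rpow_natCast ((2:ℝ) ^ (((2 * Qv σ : ℕ) : ℝ)⁻¹)) (2 * Qv σ),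
       ← Real.rpow_mul (by norm_num : (0:ℝ) ≤ 2)]
    rw [inv_mul_cancel₀ (ne_of_gt hQ), Real.rpow_one]

theorem claimA : ∃ CA : ℝ, 1 ≤ CA ∧ ∀ c ∉ Pset σ, ∀ n : ℕ,
    (pcnt σ (iterW σ n [c]) : ℝ) ≤ CA * (ecnt σ (iterW σ n [c]) : ℝ) := by
  obtain ⟨ρ, hρ1, hρQ⟩ := rho_exists σ
  have hρ0 : (0:ℝ) < ρ := lt_trans one_pos hρ1
  obtain ⟨C, hC1, hG⟩ := Gf_le σ hρ1
  have hC0 : (0:ℝ) ≤ C := by linarith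
  have hS0 : (0:ℝ) ≤ (Smax σ : ℝ) := Nat.cast_nonneg _
  have hiρ0 : 0 ≤ ρ⁻¹ := le_of_lt (inv_pos.mpr hρ0)
  have hiρ1 : ρ⁻¹ < 1 := inv_lt_one_of_one_lt₀ hρ1
  refine ⟨2*C + 2*C*Smax σ * (ρ⁻¹ * (1-ρ⁻¹)⁻¹), by nlinarith [mul_nonneg (mul_nonneg (mul_nonneg (by norm_num : (0:ℝ) ≤ 2) hC0) hS0) (mul_nonneg hiρ0 (le_of_lt (inv_pos.mpr (by linarith : (0:ℝ) < 1 - ρ⁻¹))))], ?_⟩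
  intro c hc n
  set en : ℝ := (ecnt σ (iterW σ n [c]) : ℝ) with hen
  have hen0 : 0 ≤ en := Nat.cast_nonneg _
  -- the key comparison: for j ≤ n, ecnt at time j is exponentially smaller
  have hkey : ∀ j ≤ n, (ecnt σ (iterW σ j [c]) : ℝ) * ρ ^ (2*(n-j)) ≤ 2 * en := by
    intro j hj
    set q := (n-j) / Qv σ with hqd
    have hgrow := ecnt_growth σ hj [c]
    have hcast : (2:ℝ) ^ q * (ecnt σ (iterW σ j [c]) : ℝ) ≤ en := by
      rw [hen]; exact_mod_cast hgrow
    have hexp : 2*(n-j) ≤ 2*Qv σ * (q+1) := by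
      have h0 : 0 < Qv σ := one_le_Qv σ
      have hdm := Nat.div_add_mod (n-j) (Qv σ)
      have hmod := Nat.mod_lt (n-j) h0
      rw [← hqd] at hdm
      have hd1 : Qv σ * (q+1) = Qv σ * q + Qv σ := by ring
      have hle : n - j ≤ Qv σ * (q+1) := by omega
      have hd2 : 2*Qv σ * (q+1) = 2*(Qv σ * (q+1)) := by ring
      omega
    have hρpow : ρ ^ (2*(n-j)) ≤ 2 * (2:ℝ) ^ q := by
      calc ρ ^ (2*(n-j)) ≤ ρ ^ (2*Qv σ * (q+1)) := pow_le_pow_right₀ hρ1.le hexp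
        _ = (ρ ^ (2*Qv σ)) ^ (q+1) := by rw [← pow_mul]
        _ = 2 ^ (q+1) := by rw [hρQ]
        _ = 2 * 2 ^ q := by ring
    have h0j : (0:ℝ) ≤ (ecnt σ (iterW σ j [c]) : ℝ) := Nat.cast_nonneg _
    calc (ecnt σ (iterW σ j [c]) : ℝ) * ρ ^ (2*(n-j))
        ≤ (ecnt σ (iterW σ j [c]) : ℝ) * (2 * 2 ^ q) := by
          exact mul_le_mul_of_nonneg_left hρpow h0j
      _ = 2 * (2 ^ q * (ecnt σ (iterW σ j [c]) : ℝ)) := by ring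
      _ ≤ 2 * en := by linarith
  -- bound each term of the Bpp sum
  have hterm : ∀ j ∈ Finset.range n,
      (Gf σ (n-1-j) : ℝ) * Smax σ * ecnt σ (iterW σ j [c])
        ≤ 2*C*Smax σ * en * (ρ⁻¹) ^ (n-j) := by
    intro j hj
    rw [Finset.mem_range] at hj
    set m := n - j with hm
    have hm1 : 1 ≤ m := by omega
    have hkj := hkey j (le_of_lt hj)
    have hGj : (Gf σ (n-1-j) : ℝ) ≤ C * ρ ^ (n-1-j) := hG _
    have h0j : (0:ℝ) ≤ (ecnt σ (iterW σ j [c]) : ℝ) := Nat.cast_nonneg _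
    have hpow2m : (0:ℝ) < ρ ^ (2*m) := pow_pos hρ0 _
    -- multiply target by ρ^(2m)
    rw [← mul_le_mul_iff_of_pos_right hpow2m]
    have hL : (Gf σ (n-1-j) : ℝ) * Smax σ * ecnt σ (iterW σ j [c]) * ρ ^ (2*m)
        ≤ C * ρ ^ (n-1-j) * Smax σ * (2 * en) := by
      calc (Gf σ (n-1-j) : ℝ) * Smax σ * ecnt σ (iterW σ j [c]) * ρ ^ (2*m)
          = ((Gf σ (n-1-j) : ℝ) * Smax σ) * ((ecnt σ (iterW σ j [c]) : ℝ) * ρ ^ (2*m)) := by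
            ring
        _ ≤ (C * ρ ^ (n-1-j) * Smax σ) * (2 * en) := by
            apply mul_le_mul
            · exact mul_le_mul_of_nonneg_right hGj hS0
            · exact hkj
            · positivity
            · positivity
    have hR : C * ρ ^ (n-1-j) * Smax σ * (2 * en)
        ≤ 2*C*Smax σ * en * (ρ⁻¹) ^ m * ρ ^ (2*m) := by
      have hcancel : (ρ⁻¹) ^ m * ρ ^ (2*m) = ρ ^ m := by
        rw [inv_pow, two_mul, pow_add]
        field_simp
      rw [mul_assoc (2*C*Smax σ * en), hcancel]
      have hmono : ρ ^ (n-1-j) ≤ ρ ^ m := pow_le_pow_right₀ hρ1.le (by omega)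
      nlinarith [mul_nonneg (mul_nonneg hC0 hS0) hen0, mul_nonneg (mul_nonneg (mul_nonneg hC0 hS0) hen0) (le_of_lt (pow_pos hρ0 (n-1-j)))]
    exact le_trans hL hR
  -- sum of the geometric tail
  have hsum : ∑ j ∈ Finset.range n, (2*C*Smax σ * en) * (ρ⁻¹) ^ (n-j)
      ≤ (2*C*Smax σ * en) * (ρ⁻¹ * (1-ρ⁻¹)⁻¹) := by
    rw [← Finset.mul_sum]
    apply mul_le_mul_of_nonneg_left _ (by positivity)
    have hrefl : ∑ j ∈ Finset.range n, (ρ⁻¹) ^ (n-j) = ∑ j ∈ Finset.range n, (ρ⁻¹) ^ (j+1) := by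
      have := Finset.sum_range_reflect (fun j => (ρ⁻¹) ^ (j+1)) n
      rw [← this]
      apply Finset.sum_congr rfl
      intro j hj
      rw [Finset.mem_range] at hj
      congr 1
      omega
    rw [hrefl]
    have : ∑ j ∈ Finset.range n, (ρ⁻¹) ^ (j+1) = ρ⁻¹ * ∑ j ∈ Finset.range n, (ρ⁻¹) ^ j := by
      rw [Finset.mul_sum]
      apply Finset.sum_congr rfl
      intro j hj
      ring
    rw [this]
    exact mul_le_mul_of_nonneg_left (geom_tail_le hiρ0 hiρ1 n) hiρ0
  -- the Gf σ n term
  have hGn : (Gf σ n : ℝ) ≤ 2*C*en := by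
    have h0 := hkey 0 (Nat.zero_le n)
    rw [iterW_zero, ecnt_singleton_of_not_mem σ hc] at h0
    have hρn : ρ ^ n ≤ ρ ^ (2*(n-0)) := pow_le_pow_right₀ hρ1.le (by omega)
    have : ρ ^ n ≤ 2 * en := by
      simp only [Nat.cast_one, one_mul] at h0
      linarith
    calc (Gf σ n : ℝ) ≤ C * ρ ^ n := hG n
      _ ≤ C * (2 * en) := mul_le_mul_of_nonneg_left this hC0
      _ = 2*C*en := by ring
  -- assemble
  have hB := Bpp σ n c
  have hcast : (pcnt σ (iterW σ n [c]) : ℝ) ≤ (Gf σ n : ℝ)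
      + ∑ j ∈ Finset.range n, (Gf σ (n-1-j) : ℝ) * Smax σ * ecnt σ (iterW σ j [c]) := by
    exact_mod_cast hB
  calc (pcnt σ (iterW σ n [c]) : ℝ)
      ≤ (Gf σ n : ℝ) + ∑ j ∈ Finset.range n, (Gf σ (n-1-j) : ℝ) * Smax σ * ecnt σ (iterW σ j [c]) := hcast
    _ ≤ 2*C*en + ∑ j ∈ Finset.range n, (2*C*Smax σ * en) * (ρ⁻¹) ^ (n-j) := by
        have := Finset.sum_le_sum hterm
        have hrw : ∀ j ∈ Finset.range n, 2*C*Smax σ * en * (ρ⁻¹) ^ (n-j)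
            = (2*C*Smax σ * en) * (ρ⁻¹) ^ (n-j) := by intro j hj; ring
        rw [Finset.sum_congr rfl hrw] at this
        linarith
    _ ≤ 2*C*en + (2*C*Smax σ * en) * (ρ⁻¹ * (1-ρ⁻¹)⁻¹) := by linarith
    _ = (2*C + 2*C*Smax σ * (ρ⁻¹ * (1-ρ⁻¹)⁻¹)) * en := by ring

end Doubling

section WordsMore
variable (σ : A → List A)

theorem iterW_flatMap (n : ℕ) (w : List A) :
    iterW σ n w = w.flatMap fun c => iterW σ n [c] := by
  induction w with
  | nil => rw [iterW_nil]; rfl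
  | cons x t ih => rw [iterW_cons, List.flatMap_cons, ih]

end WordsMore

section Spectral
variable [Fintype A] [DecidableEq A] (σ : A → List A)

theorem count_flatMap (g : A → List A) (i : A) (w : List A) :
    (w.flatMap g).count i = ∑ k : A, w.count k * (g k).count i := by
  induction w with
  | nil => simp
  | cons x t ih =>
    rw [List.flatMap_cons, List.count_append, ih]
    have hsplit : ∑ k : A, (x :: t).count k * (g k).count i
        = ∑ k : A, (t.count k * (g k).count i + (if k = x then (g k).count i else 0)) := by
      apply Finset.sum_congr rfl
      intro k _
      rw [List.count_cons]
      simp only [beq_iff_eq]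
      by_cases h : k = x
      · rw [if_pos h, if_pos h.symm]; ring
      · rw [if_neg h, if_neg fun he => h he.symm]; ring
    rw [hsplit, Finset.sum_add_distrib, Finset.sum_ite_eq' Finset.univ x fun k => (g k).count i]
    simp only [Finset.mem_univ, if_true]
    omega

theorem count_iterW (n : ℕ) (w : List A) (i : A) :
    (iterW σ n w).count i = ∑ k : A, w.count k * (iterW σ n [k]).count i := by
  rw [iterW_flatMap]
  exact count_flatMap (fun c => iterW σ n [c]) i w

theorem incMat_pow_apply (n : ℕ) (i j : A) :
    ((incMat σ) ^ n) i j = (((iterW σ n [j]).count i : ℕ) : ℂ) := by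
  induction n generalizing i j with
  | zero =>
    rw [pow_zero, Matrix.one_apply, iterW_zero]
    by_cases h : i = j
    · simp [h]
    · simp [h, Ne.symm h, List.count_singleton']
  | succ n ih =>
    rw [pow_succ, Matrix.mul_apply]
    have hR : iterW σ (n+1) [j] = iterW σ n (σ j) := by
      rw [iterW_succ, mapW_singleton]
    rw [hR, count_iterW]
    push_cast
    apply Finset.sum_congr rfl
    intro k _
    rw [ih]
    have : (incMat σ) k j = (((σ j).count k : ℕ) : ℂ) := rfl
    rw [this]
    push_cast
    ring

theorem exists_expLetter (hA : Nonempty A) (hθ : 1 < specRad σ) : ∃ c : A, c ∉ Pset σ := by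
  haveI := hA
  by_contra hPc
  push_neg at hPc
  have hP : ∀ c : A, c ∈ Pset σ := hPc
  -- an eigenvalue of modulus > 1
  have hμex : ∃ μ ∈ spectrum ℂ (incMat σ), 1 < ‖μ‖ := by
    by_contra h
    push_neg at h
    have : specRad σ ≤ 1 := by
      apply Real.sSup_le _ zero_le_one
      rintro x ⟨μ, hμ, rfl⟩
      exact h μ hμ
    linarith
  obtain ⟨μ, hμmem, hμ1⟩ := hμex
  have hdet : (algebraMap ℂ (Matrix A A ℂ) μ - incMat σ).det = 0 := by
    have hni := spectrum.mem_iff.mp hμmem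
    by_contra hd
    exact hni ((Matrix.isUnit_iff_isUnit_det _).mpr (isUnit_iff_ne_zero.mpr hd))
  obtain ⟨v, hv0, hveq⟩ := Matrix.exists_mulVec_eq_zero_iff.mpr hdet
  have heig : (incMat σ).mulVec v = μ • v := by
    rw [Algebra.algebraMap_eq_smul_one, Matrix.sub_mulVec, Matrix.smul_mulVec,
      Matrix.one_mulVec] at hveq
    exact (sub_eq_zero.mp hveq).symm
  have hpow : ∀ n : ℕ, ((incMat σ) ^ n).mulVec v = μ ^ n • v := by
    intro n
    induction n with
    | zero => simp [Matrix.one_mulVec]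
    | succ n ih =>
      rw [pow_succ', ← Matrix.mulVec_mulVec, ih, Matrix.mulVec_smul, heig, smul_smul, ← pow_succ]
  obtain ⟨i₀, -, hmax⟩ := Finset.exists_max_image Finset.univ (fun i => ‖v i‖) Finset.univ_nonempty
  have hvi : 0 < ‖v i₀‖ := by
    obtain ⟨k, hk⟩ := Function.ne_iff.mp hv0
    exact lt_of_lt_of_le (norm_pos_iff.mpr hk) (hmax k (Finset.mem_univ k))
  obtain ⟨r, hr1, hrμ⟩ : ∃ r : ℝ, 1 < r ∧ r < ‖μ‖ := ⟨(1 + ‖μ‖)/2, by linarith, by linarith⟩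
  have hr0 : (0:ℝ) < r := lt_trans one_pos hr1
  obtain ⟨C, hC1, hPC⟩ := Puniform σ hr1
  have hbound : ∀ n : ℕ, ‖μ‖ ^ n ≤ (Fintype.card A) * C * r ^ n := by
    intro n
    have h1 : (((incMat σ) ^ n).mulVec v) i₀ = μ ^ n * v i₀ := by
      rw [hpow n]
      simp
    have h2 : ‖(((incMat σ) ^ n).mulVec v) i₀‖ ≤ (∑ j : A, (grw σ j n : ℝ)) * ‖v i₀‖ := by
      have hmv : (((incMat σ) ^ n).mulVec v) i₀ = ∑ j : A, ((incMat σ) ^ n) i₀ j * v j := by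
        simp [Matrix.mulVec, dotProduct]
      rw [hmv]
      calc ‖∑ j : A, ((incMat σ) ^ n) i₀ j * v j‖
          ≤ ∑ j : A, ‖((incMat σ) ^ n) i₀ j * v j‖ := norm_sum_le _ _
        _ ≤ ∑ j : A, (grw σ j n : ℝ) * ‖v i₀‖ := by
            apply Finset.sum_le_sum
            intro j _
            rw [norm_mul, incMat_pow_apply, Complex.norm_natCast]
            apply mul_le_mul _ (hmax j (Finset.mem_univ j)) (norm_nonneg _) (Nat.cast_nonneg _)
            exact_mod_cast List.count_le_length
        _ = (∑ j : A, (grw σ j n : ℝ)) * ‖v i₀‖ := by rw [Finset.sum_mul]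
    have h3 : ∑ j : A, (grw σ j n : ℝ) ≤ (Fintype.card A) * (C * r ^ n) := by
      calc ∑ j : A, (grw σ j n : ℝ) ≤ ∑ _j : A, C * r ^ n :=
            Finset.sum_le_sum fun j _ => hPC j (hP j) n
        _ = (Fintype.card A) * (C * r ^ n) := by
            rw [Finset.sum_const, Finset.card_univ, nsmul_eq_mul]
    have h4 : ‖μ‖ ^ n * ‖v i₀‖ ≤ ((Fintype.card A) * (C * r ^ n)) * ‖v i₀‖ := by
      calc ‖μ‖ ^ n * ‖v i₀‖ = ‖μ ^ n * v i₀‖ := by rw [norm_mul, norm_pow]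
        _ = ‖(((incMat σ) ^ n).mulVec v) i₀‖ := by rw [h1]
        _ ≤ (∑ j : A, (grw σ j n : ℝ)) * ‖v i₀‖ := h2
        _ ≤ ((Fintype.card A) * (C * r ^ n)) * ‖v i₀‖ :=
            mul_le_mul_of_nonneg_right h3 (norm_nonneg _)
    have h5 := le_of_mul_le_mul_right h4 hvi
    linarith [h5]
  have hgt1 : (1:ℝ) < ‖μ‖ / r := by
    rw [lt_div_iff₀ hr0, one_mul]
    exact hrμ
  obtain ⟨n, hn⟩ := pow_unbounded_of_one_lt ((Fintype.card A : ℝ) * C) hgt1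
  have hrn : (0:ℝ) < r ^ n := pow_pos hr0 n
  have hmul := mul_lt_mul_of_pos_right hn hrn
  rw [div_pow, div_mul_cancel₀ _ (ne_of_gt hrn)] at hmul
  have := hbound n
  linarith

end Spectral

section Prefixes
variable (u : ℕ → A)

/-- prefix of length `N` of the infinite word `u` -/
def pre (N : ℕ) : List A := List.ofFn fun i : Fin N => u i

theorem length_pre (N : ℕ) : (pre u N).length = N := List.length_ofFn ..

theorem getElem_pre {N i : ℕ} (h : i < (pre u N).length) : (pre u N)[i] = u i := by
  simp [pre]

theorem isPrefOf_pre (N : ℕ) : IsPrefOf (pre u N) u := by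
  intro i
  rw [List.get_eq_getElem, getElem_pre]

theorem eq_pre_of_isPrefOf {w : List A} (h : IsPrefOf w u) : w = pre u w.length := by
  apply List.ext_getElem
  · rw [length_pre]
  · intro n h₁ h₂
    rw [getElem_pre]
    have := h ⟨n, h₁⟩
    rw [List.get_eq_getElem] at this
    exact this

theorem pre_take {N M : ℕ} (h : N ≤ M) : (pre u M).take N = pre u N := by
  apply List.ext_getElem
  · rw [List.length_take, length_pre, length_pre]
    omega
  · intro n h₁ h₂
    rw [List.getElem_take, getElem_pre, getElem_pre]

theorem pre_prefix {N M : ℕ} (h : N ≤ M) : pre u N <+: pre u M := by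
  rw [← pre_take u h]
  exact List.take_prefix ..

theorem isPrefOf_of_prefix {w : List A} {M : ℕ} (h : w <+: pre u M) : IsPrefOf w u := by
  intro i
  rw [List.get_eq_getElem, h.getElem i.isLt]
  have hlt : (i : ℕ) < (pre u M).length := lt_of_lt_of_le i.isLt h.length_le
  rw [getElem_pre]

theorem mapW_prefix (σ : A → List A) {w w' : List A} (h : w <+: w') :
    mapW σ w <+: mapW σ w' := by
  obtain ⟨t, rfl⟩ := h
  rw [mapW_append]
  exact ⟨mapW σ t, rfl⟩

end Prefixes

end Stmt13


open Stmt13 Filter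

/-- if the spectral radius of the incidence matrix of `σ` exceeds 1,
then the dilation factor `liminf |σ(u₁⋯u_N)|/N` exceeds 1. -/
theorem stmt_13 {A : Type*} [Fintype A] [DecidableEq A] (σ : A → List A) (a : A)
    (hpro : Prolongable σ a)
    (u : ℕ → A) (hu : ∀ n : ℕ, IsPrefOf (iterW σ n [a]) u)
    (hall : ∀ c : A, ∃ i : ℕ, u i = c)
    (hθ : 1 < specRad σ) :
    1 < Filter.atTop.liminf fun N : ℕ =>
      ((mapW σ (List.ofFn fun i : Fin N => u i)).length : ℝ) / (N : ℝ) := by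
  classical
  show 1 < Filter.atTop.liminf fun N : ℕ => ((mapW σ (pre u N)).length : ℝ) / (N : ℝ)
  obtain ⟨-, htop⟩ := hpro
  haveI : Nonempty A := ⟨a⟩
  set ℓ : ℕ → ℕ := fun n => (iterW σ n [a]).length with hℓ
  have hpreEq : ∀ n, iterW σ n [a] = pre u (ℓ n) := fun n => eq_pre_of_isPrefOf u (hu n)
  have hσpre : ∀ N, IsPrefOf (mapW σ (pre u N)) u := by
    intro N
    obtain ⟨n, hn⟩ := (htop.eventually_ge_atTop N).exists
    have h2 : pre u N <+: iterW σ n [a] := by rw [hpreEq n]; exact pre_prefix u hn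
    have h3 := mapW_prefix σ h2
    rw [← iterW_succ' σ n [a], hpreEq (n+1)] at h3
    exact isPrefOf_of_prefix u h3
  set L : ℕ → ℕ := fun N => (mapW σ (pre u N)).length with hL
  have hσpre' : ∀ N, mapW σ (pre u N) = pre u (L N) := by
    intro N
    have := eq_pre_of_isPrefOf u (hσpre N)
    rwa [hL]
  have hLmono : Monotone L := by
    intro N M h
    have h1 := (mapW_prefix σ (pre_prefix u h)).length_le
    simpa [hL] using h1
  have hℓL : ∀ n, ℓ (n+1) = L (ℓ n) := by
    intro n
    have h1 : iterW σ (n+1) [a] = mapW σ (pre u (ℓ n)) := by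
      rw [iterW_succ', hpreEq n]
    simp only [hℓ, hL]
    rw [h1]
  have hiterpre : ∀ j N, iterW σ j (pre u N) = pre u (L^[j] N) := by
    intro j
    induction j with
    | zero => intro N; rw [iterW_zero, Function.iterate_zero_apply]
    | succ j ih =>
      intro N
      rw [iterW_succ', ih, hσpre', Function.iterate_succ_apply']
  have horb : ∀ j N, 1 ≤ N → ℓ j ≤ L^[j] N := by
    intro j
    induction j with
    | zero =>
      intro N h1
      simpa [hℓ, iterW_zero] using h1
    | succ j ih =>
      intro N h1
      rw [Function.iterate_succ_apply', hℓL j]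
      exact hLmono (ih N h1)
  have hLge : ∀ N, N ≤ L N := by
    intro N
    rcases Nat.eq_zero_or_pos N with h0 | h1
    · subst h0; exact Nat.zero_le _
    by_contra hlt
    push_neg at hlt
    have hdec : ∀ j, L^[j+1] N ≤ L^[j] N := by
      intro j
      induction j with
      | zero => simpa using hlt.le
      | succ j ih =>
        have h2 := hLmono ih
        rwa [← Function.iterate_succ_apply' L (j+1), ← Function.iterate_succ_apply' L j] at h2
    have hbd : ∀ j, L^[j] N ≤ N := by
      intro j
      induction j with
      | zero => simp
      | succ j ih => exact le_trans (hdec j) ih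
    obtain ⟨n, hn⟩ := (htop.eventually_gt_atTop N).exists
    have h2 := horb n N h1
    have h3 := hbd n
    omega
  have hstep : ∀ N j, L^[j+1] N ≤ L^[j] N + Smax σ ^ j * (L N - N) := by
    intro N j
    have hv : pre u N ++ (pre u (L N)).drop N = pre u (L N) := by
      have h0 := List.take_append_drop N (pre u (L N))
      rwa [pre_take u (hLge N)] at h0
    have hvlen : ((pre u (L N)).drop N).length = L N - N := by
      rw [List.length_drop, length_pre]
    have h1 : iterW σ j (pre u N) ++ iterW σ j ((pre u (L N)).drop N)
        = iterW σ j (pre u (L N)) := by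
      rw [← iterW_append]
      exact congrArg (iterW σ j) hv
    have h2 : L^[j] (L N) = L^[j] N + (iterW σ j ((pre u (L N)).drop N)).length := by
      have e1 := congrArg List.length h1
      rw [hiterpre j (L N), hiterpre j N, List.length_append, length_pre, length_pre] at e1
      omega
    have h3 : (iterW σ j ((pre u (L N)).drop N)).length ≤ Smax σ ^ j * (L N - N) := by
      have h4 := length_iterW_le σ j ((pre u (L N)).drop N)
      rwa [hvlen] at h4
    have h4 : L^[j+1] N = L^[j] (L N) := Function.iterate_succ_apply L j N
    omega
  have hsumb : ∀ K N, L^[K] N ≤ N + (∑ j ∈ Finset.range K, Smax σ ^ j) * (L N - N) := by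
    intro K N
    induction K with
    | zero => simp
    | succ K ih =>
      have h1 := hstep N K
      rw [Finset.sum_range_succ, Nat.add_mul]
      omega
  -- the exponential letter and associated constants
  obtain ⟨cE, hcE⟩ := exists_expLetter σ ⟨a⟩ hθ
  obtain ⟨CA, hCA1, hCAspec⟩ := claimA σ
  obtain ⟨ρ, hρ1, hρQ⟩ := rho_exists σ
  have hρ0 : (0:ℝ) < ρ := lt_trans one_pos hρ1
  obtain ⟨C, hC1, hG⟩ := Gf_le σ hρ1
  obtain ⟨posE, hposE⟩ := hall cE
  obtain ⟨mstar, hmstar⟩ := (htop.eventually_gt_atTop posE).exists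
  set w0 : List A := iterW σ mstar [a] with hw0
  have hcmem : cE ∈ w0 := by
    rw [hw0, hpreEq mstar]
    have hlt : posE < (pre u (ℓ mstar)).length := by rw [length_pre]; exact hmstar
    have h1 : (pre u (ℓ mstar))[posE] = u posE := getElem_pre u hlt
    rw [hposE] at h1
    exact h1 ▸ List.getElem_mem hlt
  have hEc : ∀ j : ℕ, 2 ^ (j / Qv σ) ≤ ecnt σ (iterW σ j w0) := by
    intro j
    obtain ⟨s, t, hst⟩ := List.append_of_mem hcmem
    have h1 : ecnt σ (iterW σ j w0)
        = ecnt σ (iterW σ j s) + (ecnt σ (iterW σ j [cE]) + ecnt σ (iterW σ j t)) := by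
      rw [hst, iterW_append, iterW_cons, ecnt_append, ecnt_append]
    have h2 := ecnt_growth σ (Nat.zero_le j) [cE]
    rw [iterW_zero, ecnt_singleton_of_not_mem σ hcE, Nat.sub_zero, Nat.mul_one] at h2
    omega
  have hρ2 : ∀ j : ℕ, ρ ^ (2*j) ≤ 2 * (ecnt σ (iterW σ j w0) : ℝ) := by
    intro j
    have h1 := hEc j
    have h0 : 0 < Qv σ := one_le_Qv σ
    set q := j / Qv σ with hq
    have hdm := Nat.div_add_mod j (Qv σ)
    have hmod := Nat.mod_lt j h0
    rw [← hq] at hdm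
    have hd1 : Qv σ * (q+1) = Qv σ * q + Qv σ := by ring
    have hle : j ≤ Qv σ * (q+1) := by omega
    have hexp : 2*j ≤ 2*Qv σ * (q+1) := by
      have hd2 : 2*Qv σ * (q+1) = 2*(Qv σ * (q+1)) := by ring
      omega
    have hρp : ρ ^ (2*j) ≤ 2 * (2:ℝ) ^ q :=
      calc ρ ^ (2*j) ≤ ρ ^ (2*Qv σ * (q+1)) := pow_le_pow_right₀ hρ1.le hexp
        _ = (ρ ^ (2*Qv σ)) ^ (q+1) := by rw [← pow_mul]
        _ = 2 ^ (q+1) := by rw [hρQ]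
        _ = 2 * 2 ^ q := by ring
    have hcast : (2:ℝ) ^ q ≤ (ecnt σ (iterW σ j w0) : ℝ) := by exact_mod_cast h1
    linarith
  have hpcb : ∀ j : ℕ, (pcnt σ (iterW σ j w0) : ℝ)
      ≤ (w0.length : ℝ) * (Gf σ j : ℝ) + CA * (ecnt σ (iterW σ j w0) : ℝ) := by
    intro j
    have hpt : ∀ x : A, (pcnt σ (iterW σ j [x]) : ℝ)
        ≤ (Gf σ j : ℝ) + CA * ((ecnt σ (iterW σ j [x]) : ℕ) : ℝ) := by
      intro x
      by_cases hx : x ∈ Pset σ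
      · have h1 : (pcnt σ (iterW σ j [x]) : ℝ) ≤ (Gf σ j : ℝ) := by
          exact_mod_cast le_trans (pcnt_le_grw σ x j) (grw_le_Gf σ hx j)
        have h2 : (0:ℝ) ≤ CA * ((ecnt σ (iterW σ j [x]) : ℕ) : ℝ) :=
          mul_nonneg (by linarith) (Nat.cast_nonneg _)
        linarith
      · have h1 := hCAspec x hx j
        have h2 : (0:ℝ) ≤ (Gf σ j : ℝ) := Nat.cast_nonneg _
        linarith
    have h3 := real_listsum_le (l := w0) (F := fun x => pcnt σ (iterW σ j [x]))
      (G := fun x => ecnt σ (iterW σ j [x])) (B := (Gf σ j : ℝ)) (CA := CA)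
      (fun y _ => hpt y) (Nat.cast_nonneg _)
    rw [← pcnt_iterW_sum, ← ecnt_iterW_sum] at h3
    exact h3
  have hℓm : ∀ j, ℓ (mstar + j) = (iterW σ j w0).length := by
    intro j
    have h1 : iterW σ (mstar + j) [a] = iterW σ j w0 := by
      rw [Nat.add_comm, iterW_add, ← hw0]
    simp only [hℓ]
    rw [h1]
  obtain ⟨j₁, hj₁⟩ := pow_unbounded_of_one_lt (2*C*(w0.length : ℝ)) hρ1
  have hdom : ∀ j, j₁ ≤ j → ((w0.length : ℝ) * (Gf σ j : ℝ)) ≤ (ecnt σ (iterW σ j w0) : ℝ) := by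
    intro j hj
    have h1 : (Gf σ j : ℝ) ≤ C * ρ ^ j := hG j
    have h2 : ρ ^ j₁ ≤ ρ ^ j := pow_le_pow_right₀ hρ1.le hj
    have hρj0 : (0:ℝ) < ρ ^ j := pow_pos hρ0 j
    have e1 : ρ ^ (2*j) = ρ ^ j * ρ ^ j := by rw [two_mul, pow_add]
    have e2 : (w0.length:ℝ) * (Gf σ j : ℝ) ≤ (w0.length:ℝ) * (C * ρ ^ j) :=
      mul_le_mul_of_nonneg_left h1 (Nat.cast_nonneg _)
    have e3 := mul_le_mul_of_nonneg_right hj₁.le hρj0.le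
    have e4 : ρ ^ j₁ * ρ ^ j ≤ ρ ^ j * ρ ^ j := mul_le_mul_of_nonneg_right h2 hρj0.le
    have e5 := hρ2 j
    rw [e1] at e5
    nlinarith
  have hub : ∀ j, j₁ ≤ j → (ℓ (mstar + j) : ℝ) ≤ (CA + 2) * (ecnt σ (iterW σ j w0) : ℝ) := by
    intro j hj
    have h1 : ℓ (mstar + j) = ecnt σ (iterW σ j w0) + pcnt σ (iterW σ j w0) := by
      rw [hℓm j]; exact length_eq_ecnt_add_pcnt σ _
    have h2 := hpcb j
    have h3 := hdom j hj
    have h4 : (ℓ (mstar + j) : ℝ)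
        = (ecnt σ (iterW σ j w0) : ℝ) + (pcnt σ (iterW σ j w0) : ℝ) := by
      rw [h1]; push_cast; ring
    rw [h4]
    linarith
  obtain ⟨k₀, hk₀⟩ := pow_unbounded_of_one_lt (2*(CA+2)) (by norm_num : (1:ℝ) < 2)
  set K : ℕ := k₀ * Qv σ with hK
  set m₀ : ℕ := mstar + j₁ with hm₀
  have hKdouble : ∀ m, m₀ ≤ m → 2 * ℓ m ≤ ℓ (m + K) := by
    intro m hm
    set j : ℕ := m - mstar with hjd
    have hjm : m = mstar + j := by omega
    have hjj₁ : j₁ ≤ j := by omega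
    have h1 : ℓ (m + K) = (iterW σ (j + K) w0).length := by
      rw [hjm, Nat.add_assoc]
      exact hℓm (j + K)
    have h2 : ecnt σ (iterW σ (j + K) w0) ≤ (iterW σ (j + K) w0).length :=
      ecnt_le_length σ _
    have h3 : 2 ^ k₀ * ecnt σ (iterW σ j w0) ≤ ecnt σ (iterW σ (j + K) w0) := by
      calc 2 ^ k₀ * ecnt σ (iterW σ j w0)
          ≤ ecnt σ (iterW σ (k₀ * Qv σ) (iterW σ j w0)) := ecnt_pow_double σ k₀ _
        _ = ecnt σ (iterW σ (j + K) w0) := by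
            rw [show j + K = K + j from Nat.add_comm j K, iterW_add σ K j w0, hK]
    -- real comparison
    have h5 := hub j hjj₁
    have h6 : (2:ℝ)*(CA+2) ≤ (2:ℝ) ^ k₀ := hk₀.le
    have h7 : (0:ℝ) ≤ (ecnt σ (iterW σ j w0) : ℝ) := Nat.cast_nonneg _
    have h8 : ((2:ℕ) ^ k₀ * ecnt σ (iterW σ j w0) : ℝ) ≤ (ecnt σ (iterW σ (j + K) w0) : ℝ) := by
      exact_mod_cast h3
    have h9 : (2:ℝ) * (ℓ m : ℝ) ≤ (ℓ (m + K) : ℝ) := by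
      have e1 : (ℓ m : ℝ) ≤ (CA + 2) * (ecnt σ (iterW σ j w0) : ℝ) := by
        rw [hjm]; exact h5
      have e2 : (ecnt σ (iterW σ (j + K) w0) : ℝ) ≤ (ℓ (m + K) : ℝ) := by
        rw [h1]; exact_mod_cast h2
      push_cast at h8
      nlinarith
    exact_mod_cast h9
  set cs : ℕ := ∑ j ∈ Finset.range (K+1), Smax σ ^ j with hcs
  have hcs1 : 1 ≤ cs := by
    have h1 : Smax σ ^ 0 ≤ cs := by
      rw [hcs]
      exact Finset.single_le_sum (f := fun j => Smax σ ^ j) (fun i _ => Nat.zero_le _)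
        (Finset.mem_range.mpr (Nat.succ_pos K))
    simpa using h1
  set δ : ℝ := (cs : ℝ)⁻¹ with hδ
  have hcs0 : (0:ℝ) < (cs:ℝ) := by exact_mod_cast hcs1
  have hδ0 : 0 < δ := inv_pos.mpr hcs0
  -- iterates of L on ℓ-values
  have hLiter : ∀ k m, L^[k] (ℓ m) = ℓ (m + k) := by
    intro k
    induction k with
    | zero => intro m; simp
    | succ k ih =>
      intro m
      rw [Function.iterate_succ_apply', ih, ← hℓL (m+k)]
      try rfl
  -- the eventual bound
  have hev : ∀ N, max (ℓ m₀) 1 ≤ N → 1 + δ ≤ (L N : ℝ) / N := by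
    intro N hN
    have hNm₀ : ℓ m₀ ≤ N := le_trans (le_max_left _ _) hN
    have hN1 : 1 ≤ N := le_trans (le_max_right _ _) hN
    obtain ⟨M, hM⟩ := eventually_atTop.mp (htop.eventually_gt_atTop N)
    have hm₀M : m₀ < M := by
      by_contra hc
      push_neg at hc
      have := hM m₀ hc
      omega
    set m : ℕ := Nat.findGreatest (fun m => ℓ m ≤ N) M with hm
    have hPm : ℓ m ≤ N := by
      rw [hm]
      exact Nat.findGreatest_spec (P := fun m => ℓ m ≤ N) (le_of_lt hm₀M) hNm₀
    have hmge : m₀ ≤ m := by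
      rw [hm]
      exact Nat.le_findGreatest (le_of_lt hm₀M) hNm₀
    have hmlt : N < ℓ (m+1) := by
      by_cases hc : m + 1 ≤ M
      · have h5 : ¬ ℓ (m+1) ≤ N :=
          Nat.findGreatest_is_greatest (P := fun m => ℓ m ≤ N) (n := M) (by omega) hc
        omega
      · push_neg at hc
        exact hM (m+1) (by omega)
    have hdbl : 2 * ℓ (m+1) ≤ ℓ (m+1+K) := hKdouble (m+1) (by omega)
    have hchain : 2 * N < L^[K+1] N := by
      have h1 : L^[K+1] (ℓ m) ≤ L^[K+1] N := hLmono.iterate (K+1) hPm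
      have h2 : L^[K+1] (ℓ m) = ℓ (m + (K+1)) := hLiter (K+1) m
      have h3 : m + (K+1) = m+1+K := by omega
      rw [h3] at h2
      omega
    have hsb := hsumb (K+1) N
    rw [← hcs] at hsb
    have hd : N < cs * (L N - N) := by
      by_contra hc
      push_neg at hc
      omega
    have hLNge := hLge N
    have hdr : (N:ℝ) < (cs:ℝ) * ((L N : ℝ) - (N:ℝ)) := by
      calc (N:ℝ) < ((cs * (L N - N) : ℕ) : ℝ) := by exact_mod_cast hd
        _ = (cs:ℝ) * ((L N : ℝ) - (N:ℝ)) := by push_cast [Nat.cast_sub hLNge]; ring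
    have hN0 : (0:ℝ) < (N:ℝ) := by exact_mod_cast hN1
    have hd2 : δ * N ≤ (L N : ℝ) - N := by
      rw [hδ]
      calc (cs:ℝ)⁻¹ * N ≤ (cs:ℝ)⁻¹ * ((cs:ℝ) * ((L N : ℝ) - N)) :=
            mul_le_mul_of_nonneg_left hdr.le (by positivity)
        _ = (L N : ℝ) - N := by field_simp
    have hfin : (L N : ℝ)/N = 1 + ((L N : ℝ) - N)/N := by field_simp; ring
    rw [hfin]
    have : δ ≤ ((L N : ℝ) - N)/N := by
      rw [le_div_iff₀ hN0]
      exact hd2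
    linarith
  have hev' : ∀ᶠ N in atTop, 1 + δ ≤ (L N : ℝ)/(N:ℝ) := eventually_atTop.mpr ⟨_, hev⟩
  have hbdd : ∀ᶠ N in atTop, (L N : ℝ)/(N:ℝ) ≤ (Smax σ : ℝ) := by
    apply eventually_atTop.mpr ⟨1, fun N hN => ?_⟩
    have hN0 : (0:ℝ) < (N:ℝ) := by exact_mod_cast hN
    rw [div_le_iff₀ hN0]
    have h1 : L N ≤ Smax σ * N := by
      have := length_mapW_le σ (pre u N)
      rwa [length_pre] at this
    exact_mod_cast h1
  have hcob : IsCoboundedUnder (· ≥ ·) atTop (fun N : ℕ => (L N : ℝ)/(N:ℝ)) :=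
    isCoboundedUnder_ge_of_eventually_le atTop hbdd
  have hlim : 1 + δ ≤ atTop.liminf (fun N : ℕ => (L N : ℝ)/(N:ℝ)) :=
    le_liminf_of_le hcob hev'
  calc (1:ℝ) < 1 + δ := by linarith
    _ ≤ _ := hlim
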